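/- Let X, Z, Y be nonempty finite sets, let p : X × Z → ℝ≥0 be a joint probability mass function (Σ_{x,z} p(x,z) = 1), let {ρ^x}_{x∈X} be a quantum encoding of X into ℂ^d, let {F_y}_{y∈Y} be a POVM on ℂ^d, and let γ : Z × Y → ℝ≥0 satisfy Σ_{z∈Z} γ(z,y) = 1 for every y ∈ Y. Then the inference accuracy satisfies Σ_{x∈X} Σ_{z∈Z} Σ_{y∈Y} p(x,z) · Re tr(ρ^x F_y) · γ(z,y) ≤ (Σ_{y∈Y} max_{x∈X} Re tr(ρ^x F_y)) · (max_{z∈Z} Σ_{x∈X} p(x,z)). (This is the paper's Theorem 1: the accuracy P{Ẑ=Z} of any quantum statistical inference procedure is bounded by 2^{Q(X→A)_ρ} times the accuracy max_z P{Z=z} of the best estimator ignoring the input, where the exponentiated maximal quantum leakage 2^{Q(X→A)_ρ} is the supremum over POVMs of Σ_y max_x tr(ρ^x F_y).) -/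

import Mathlib

open Matrix Finset
open scoped ComplexOrder

/-- The real part of the trace of a positive semidefinite complex matrix is nonnegative. -/
lemma trace_re_nonneg_of_posSemidef {n : ℕ} {M : Matrix (Fin n) (Fin n) ℂ}
    (hM : M.PosSemidef) : 0 ≤ M.trace.re := by
  have h : ∀ i, 0 ≤ (M i i).re := by
    intro i
    have := hM.dotProduct_mulVec_nonneg (Pi.single i 1)
    have hmv : M *ᵥ (Pi.single i 1) = fun j => M j i := by
      ext j; simp [mulVec, dotProduct, Pi.single_apply]
    have hval : dotProduct (star (Pi.single i 1)) (M *ᵥ (Pi.single i 1)) = M i i := by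
      rw [hmv]
      rw [dotProduct]
      rw [Finset.sum_eq_single i]
      · simp
      · intro b _ hb; simp [Pi.single_apply, hb]
      · simp
    rw [hval] at this
    exact (Complex.le_def.mp this).1
  rw [Matrix.trace, Complex.re_sum]
  exact Finset.sum_nonneg fun i _ => h i

open scoped MatrixOrder in
/-- The real part of the trace of a product of two PSD matrices is nonnegative. -/
lemma trace_mul_re_nonneg {n : ℕ} {A B : Matrix (Fin n) (Fin n) ℂ}
    (hA : A.PosSemidef) (hB : B.PosSemidef) : 0 ≤ (A * B).trace.re := by
  have hsq : CFC.sqrt A * CFC.sqrt A = A := CFC.sqrt_mul_sqrt_self A hA.nonneg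
  have h1 : (A * B).trace = (CFC.sqrt A * B * CFC.sqrt A).trace := by
    conv_lhs => rw [← hsq]
    rw [mul_assoc, Matrix.trace_mul_comm]
  have h2 : (CFC.sqrt A * B * CFC.sqrt A).PosSemidef := by
    have := hB.mul_mul_conjTranspose_same (CFC.sqrt A)
    rwa [(CFC.sqrt_nonneg A).posSemidef.isHermitian.eq] at this
  rw [h1]
  exact trace_re_nonneg_of_posSemidef h2

/-- **Theorem 1.** The accuracy `P{Ẑ = Z}` of any quantum statistical inference procedure
(encode `x ↦ ρ x`, measure with the POVM `F`, post-process with `γ`) is bounded by the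
exponentiated maximal quantum leakage `Σ_y max_x tr(ρ^x F_y)` times the accuracy
`max_z P{Z = z}` of the best estimator ignoring the input. -/
theorem accuracy_le_leakage_mul_prior
    {d : ℕ} {X Z Y : Type*}
    [Fintype X] [Nonempty X] [Fintype Z] [Nonempty Z] [Fintype Y] [Nonempty Y]
    (p : X → Z → ℝ) (hp0 : ∀ x z, 0 ≤ p x z) (hp1 : ∑ x, ∑ z, p x z = 1)
    (ρ : X → Matrix (Fin d) (Fin d) ℂ)
    (hρ : ∀ x, (ρ x).PosSemidef ∧ (ρ x).trace = 1)
    (F : Y → Matrix (Fin d) (Fin d) ℂ)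
    (hF : ∀ y, (F y).PosSemidef) (hFsum : ∑ y, F y = 1)
    (γ : Z → Y → ℝ) (hγ0 : ∀ z y, 0 ≤ γ z y) (hγ1 : ∀ y, ∑ z, γ z y = 1) :
    ∑ x, ∑ z, ∑ y, p x z * ((ρ x * F y).trace.re) * γ z y
      ≤ (∑ y, Finset.univ.sup' Finset.univ_nonempty fun x => ((ρ x * F y).trace.re))
        * Finset.univ.sup' Finset.univ_nonempty (fun z => ∑ x, p x z) := by
  set t : Y → X → ℝ := fun y x => ((ρ x * F y).trace.re) with ht
  set m : Y → ℝ := fun y => Finset.univ.sup' Finset.univ_nonempty (t y) with hm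
  set M : ℝ := Finset.univ.sup' Finset.univ_nonempty (fun z => ∑ x, p x z) with hMdef
  have ht0 : ∀ y x, 0 ≤ t y x := fun y x => trace_mul_re_nonneg (hρ x).1 (hF y)
  have hm0 : ∀ y, 0 ≤ m y := fun y => le_trans (ht0 y (Classical.arbitrary X))
    (Finset.le_sup' (t y) (mem_univ _))
  have htm : ∀ y x, t y x ≤ m y := fun y x => Finset.le_sup' (t y) (mem_univ x)
  have hM : ∀ z, (∑ x, p x z) ≤ M := fun z => Finset.le_sup' (f := fun z => ∑ x, p x z) (mem_univ z)
  calc ∑ x, ∑ z, ∑ y, p x z * t y x * γ z y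
      ≤ ∑ x, ∑ z, ∑ y, p x z * m y * γ z y := by
        refine Finset.sum_le_sum fun x _ => Finset.sum_le_sum fun z _ =>
          Finset.sum_le_sum fun y _ => ?_
        exact mul_le_mul_of_nonneg_right
          (mul_le_mul_of_nonneg_left (htm y x) (hp0 x z)) (hγ0 z y)
    _ = ∑ y, ∑ z, ∑ x, p x z * m y * γ z y := by
        calc ∑ x, ∑ z, ∑ y, p x z * m y * γ z y
            = ∑ z, ∑ x, ∑ y, p x z * m y * γ z y := Finset.sum_comm
          _ = ∑ z, ∑ y, ∑ x, p x z * m y * γ z y :=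
              Finset.sum_congr rfl fun z _ => Finset.sum_comm
          _ = ∑ y, ∑ z, ∑ x, p x z * m y * γ z y := Finset.sum_comm
    _ = ∑ y, m y * ∑ z, (∑ x, p x z) * γ z y := by
        refine Finset.sum_congr rfl fun y _ => ?_
        rw [Finset.mul_sum]
        refine Finset.sum_congr rfl fun z _ => ?_
        rw [Finset.sum_mul, Finset.mul_sum]
        refine Finset.sum_congr rfl fun x _ => ?_
        ring
    _ ≤ ∑ y, m y * ∑ z, M * γ z y := by
        refine Finset.sum_le_sum fun y _ => mul_le_mul_of_nonneg_left
          (Finset.sum_le_sum fun z _ => mul_le_mul_of_nonneg_right (hM z) (hγ0 z y)) (hm0 y)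
    _ = (∑ y, m y) * M := by
        rw [Finset.sum_mul]
        refine Finset.sum_congr rfl fun y _ => ?_
        rw [← Finset.mul_sum, hγ1 y, mul_one]
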